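/- Let β ∈ (2,3) and γ ≥ 0 with β − 1 − γ > 1. Suppose the bootstrap probability ρ ∈ (0,1] satisfies ρ = o(ν^{−1/(β−1−γ)}) for some ν = ν(n) → ∞. Suppose the number of initially active neighbours of a vertex of weight w is Poisson with mean at most Cρw (C a constant), and the number of vertices of weight ≥ w in the starting region is Poisson with mean at most C'ν w^{1−β+γ} for all w ≥ w_min. Then the expected number of vertices in the starting region having at least k ≥ 2 initially active neighbours is at most O(ν ρ^{β−1−γ}) = o(1). -/

import Mathlib

open ProbabilityTheory Filter
open scoped NNReal

section Aux

open MeasureTheory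
open scoped ENNReal

lemma poisson_tail_le_one' (r : ℝ≥0) (s : Set ℕ) : (poissonMeasure r s).toReal ≤ 1 := by
  have h := prob_le_one (μ := poissonMeasure r) (s := s)
  exact ENNReal.toReal_le_of_le_ofReal (by norm_num) (by simpa using h)

lemma poisson_tail_le_sq' (r : ℝ≥0) {k : ℕ} (hk : 2 ≤ k) :
    (poissonMeasure r {j : ℕ | k ≤ j}).toReal ≤ (r:ℝ)^2 := by
  have hmono : poissonMeasure r {j : ℕ | k ≤ j} ≤ poissonMeasure r {j : ℕ | 2 ≤ j} :=
    measure_mono (fun j hj => le_trans hk hj)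
  have key : poissonMeasure r {j : ℕ | 2 ≤ j} ≤ ENNReal.ofReal ((r:ℝ)^2) := by
    have happ : poissonMeasure r {j : ℕ | 2 ≤ j}
        = ∑' j : {j : ℕ | 2 ≤ j}, poissonPMF r j := by
      rw [← Measure.tsum_indicator_apply_singleton (poissonMeasure r) {j : ℕ | 2 ≤ j}
        MeasurableSet.of_discrete, tsum_subtype]
      congr 1; funext j
      simp only [poissonMeasure_singleton]; rfl
    let e : ℕ ≃ {j : ℕ | 2 ≤ j} :=
      { toFun := fun i => ⟨i + 2, by simp [Set.mem_setOf_eq]⟩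
        invFun := fun j => j.1 - 2
        left_inv := fun i => by simp
        right_inv := fun j => by
          have := j.2
          simp only [Set.mem_setOf_eq] at this
          ext; simp; omega }
    have hre : ∑' j : {j : ℕ | 2 ≤ j}, poissonPMF r j
        = ∑' i : ℕ, poissonPMF r (i + 2) := (e.tsum_eq (fun j => poissonPMF r j)).symm
    have hpt : ∀ i : ℕ, poissonPMF r (i + 2) ≤ ENNReal.ofReal ((r:ℝ)^2) * poissonPMF r i := by
      intro i
      have hc : ∀ m, (poissonPMF r) m = ENNReal.ofReal (poissonPMFReal r m) := fun m => rfl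
      rw [hc, hc, ← ENNReal.ofReal_mul (by positivity)]
      apply ENNReal.ofReal_le_ofReal
      unfold poissonPMFReal
      have hfact : (i.factorial : ℝ) ≤ ((i+2).factorial : ℝ) := by
        exact_mod_cast Nat.factorial_le (by omega)
      have hpow : (r:ℝ) ^ (i+2) = (r:ℝ)^2 * (r:ℝ)^i := by rw [pow_add, mul_comm]
      rw [hpow]
      calc Real.exp (-(r:ℝ)) * ((r:ℝ)^2 * (r:ℝ)^i) / ((i+2).factorial:ℝ)
          ≤ Real.exp (-(r:ℝ)) * ((r:ℝ)^2 * (r:ℝ)^i) / (i.factorial:ℝ) := by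
            gcongr
        _ = (r:ℝ)^2 * (Real.exp (-(r:ℝ)) * (r:ℝ)^i / (i.factorial:ℝ)) := by ring
    calc poissonMeasure r {j : ℕ | 2 ≤ j} = ∑' i : ℕ, poissonPMF r (i + 2) := by
          rw [happ, hre]
      _ ≤ ∑' i : ℕ, ENNReal.ofReal ((r:ℝ)^2) * poissonPMF r i := ENNReal.tsum_le_tsum hpt
      _ = ENNReal.ofReal ((r:ℝ)^2) * ∑' i : ℕ, poissonPMF r i := ENNReal.tsum_mul_left
      _ = ENNReal.ofReal ((r:ℝ)^2) := by rw [(poissonPMF r).tsum_coe, mul_one]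
  exact ENNReal.toReal_le_of_le_ofReal (by positivity) (le_trans hmono key)

lemma shell_aux' {ι : Type*} [DecidableEq ι] (α B K' : ℝ)
    (hα2 : α < 2) (hB : 0 ≤ B) (hK' : 0 < K')
    (hKrec : (2:ℝ)^α + K' * (2:ℝ)^(α-2) ≤ K')
    (T : Finset ι) (x : ι → ℝ) (hx : ∀ v ∈ T, 0 < x v)
    (hM : ∀ t : ℝ, 0 < t → ((T.filter (fun v => t ≤ x v)).card : ℝ) ≤ B * t ^ (-α)) :
    ∀ N : ℕ, ∀ S : Finset ι, S ⊆ T → S.card ≤ N → ∀ c : ℝ, 0 < c →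
      (∀ v ∈ S, x v ≤ c) → ∑ v ∈ S, (x v)^2 ≤ K' * B * c ^ (2-α) := by
  intro N
  induction N with
  | zero =>
    intro S hST hcard c hc _
    have hS : S = ∅ := Finset.card_eq_zero.mp (Nat.le_antisymm hcard (Nat.zero_le _))
    subst hS
    simp only [Finset.sum_empty]
    have : (0:ℝ) < c ^ (2-α) := Real.rpow_pos_of_pos hc _
    positivity
  | succ N ih =>
    intro S hST hcard c hc hbound
    rcases S.eq_empty_or_nonempty with rfl | hne
    · simp only [Finset.sum_empty]
      have : (0:ℝ) < c ^ (2-α) := Real.rpow_pos_of_pos hc _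
      positivity
    obtain ⟨v₀, hv₀, hmax⟩ := S.exists_max_image x hne
    set m := x v₀ with hm
    have hm0 : 0 < m := hx v₀ (hST hv₀)
    have hmc : m ≤ c := hbound v₀ hv₀
    set S₂ := S.filter (fun v => x v ≤ m/2) with hS₂
    have hS₂sub : S₂ ⊆ S := Finset.filter_subset _ _
    have hv₀not : v₀ ∉ S₂ := by
      simp only [hS₂, Finset.mem_filter]
      rintro ⟨-, h⟩
      linarith
    have hcard₂ : S₂.card ≤ N := by
      have hsub : S₂ ⊆ S.erase v₀ := fun v hv =>
        Finset.mem_erase.mpr ⟨fun h => hv₀not (h ▸ hv), hS₂sub hv⟩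
      have := Finset.card_le_card hsub
      have := Finset.card_erase_of_mem hv₀
      omega
    have hsplit : ∑ v ∈ S, (x v)^2 = ∑ v ∈ S \ S₂, (x v)^2 + ∑ v ∈ S₂, (x v)^2 :=
      (Finset.sum_sdiff hS₂sub).symm
    have hsub1 : S \ S₂ ⊆ T.filter (fun v => m/2 ≤ x v) := by
      intro v hv
      obtain ⟨hvS, hvnot⟩ := Finset.mem_sdiff.mp hv
      refine Finset.mem_filter.mpr ⟨hST hvS, ?_⟩
      by_contra h
      exact hvnot (Finset.mem_filter.mpr ⟨hvS, by linarith⟩)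
    have hcard1 : ((S \ S₂).card : ℝ) ≤ B * (m/2) ^ (-α) := by
      refine le_trans ?_ (hM (m/2) (by positivity))
      exact_mod_cast Finset.card_le_card hsub1
    have h1 : ∑ v ∈ S \ S₂, (x v)^2 ≤ ((S \ S₂).card : ℝ) * m^2 := by
      have : ∀ v ∈ S \ S₂, (x v)^2 ≤ m^2 := by
        intro v hv
        have hvS := (Finset.mem_sdiff.mp hv).1
        have h1 := (hx v (hST hvS)).le
        have h2 := hmax v hvS
        nlinarith
      calc ∑ v ∈ S \ S₂, (x v)^2 ≤ ∑ _v ∈ S \ S₂, m^2 := Finset.sum_le_sum this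
        _ = ((S \ S₂).card : ℝ) * m^2 := by rw [Finset.sum_const, nsmul_eq_mul]
    have hmpos : (0:ℝ) < m ^ α := Real.rpow_pos_of_pos hm0 α
    have h2pos : (0:ℝ) < (2:ℝ)^α := Real.rpow_pos_of_pos two_pos α
    have hmalg : (m/2) ^ (-α) * m^2 = (2:ℝ)^α * m^(2-α) := by
      rw [Real.div_rpow hm0.le (by norm_num), Real.rpow_neg hm0.le, Real.rpow_neg (by norm_num),
        Real.rpow_sub hm0, show m ^ (2:ℝ) = m^2 from by
          rw [show (2:ℝ) = ((2:ℕ):ℝ) by norm_num, Real.rpow_natCast]]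
      field_simp
    have hm2alg : (m/2) ^ ((2:ℝ)-α) = (2:ℝ)^(α-2) * m^((2:ℝ)-α) := by
      rw [Real.div_rpow hm0.le (by norm_num),
        show ((2:ℝ):ℝ) ^ ((2:ℝ)-α) = ((2:ℝ)^(α-2))⁻¹ from by
          rw [show (2:ℝ)-α = -(α-2) by ring, Real.rpow_neg (by norm_num)],
        div_eq_mul_inv, inv_inv, mul_comm]
    have h2 : ∑ v ∈ S₂, (x v)^2 ≤ K' * B * (m/2) ^ ((2:ℝ)-α) :=
      ih S₂ (hS₂sub.trans hST) hcard₂ (m/2) (by positivity)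
        (fun v hv => (Finset.mem_filter.mp hv).2)
    have hmc' : m ^ ((2:ℝ)-α) ≤ c ^ ((2:ℝ)-α) :=
      Real.rpow_le_rpow hm0.le hmc (by linarith)
    have hmnonneg : (0:ℝ) ≤ m ^ ((2:ℝ)-α) := (Real.rpow_pos_of_pos hm0 _).le
    calc ∑ v ∈ S, (x v)^2 = ∑ v ∈ S \ S₂, (x v)^2 + ∑ v ∈ S₂, (x v)^2 := hsplit
      _ ≤ B * (m/2) ^ (-α) * m^2 + K' * B * (m/2) ^ ((2:ℝ)-α) := by
          refine add_le_add (le_trans h1 ?_) h2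
          exact mul_le_mul_of_nonneg_right hcard1 (by positivity)
      _ = ((2:ℝ)^α + K' * (2:ℝ)^(α-2)) * (B * m ^ ((2:ℝ)-α)) := by
          rw [mul_assoc, hmalg, hm2alg]; ring
      _ ≤ K' * (B * m ^ ((2:ℝ)-α)) :=
          mul_le_mul_of_nonneg_right hKrec (by positivity)
      _ ≤ K' * B * c ^ ((2:ℝ)-α) := by
          rw [mul_assoc]
          exact mul_le_mul_of_nonneg_left
            (mul_le_mul_of_nonneg_left hmc' hB) hK'.le

lemma shell_sum' {ι : Type*} [DecidableEq ι] (α B : ℝ)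
    (hα1 : 0 < α) (hα2 : α < 2) (hB : 0 ≤ B)
    (T : Finset ι) (x : ι → ℝ) (hx : ∀ v ∈ T, 0 < x v)
    (hM : ∀ t : ℝ, 0 < t → ((T.filter (fun v => t ≤ x v)).card : ℝ) ≤ B * t ^ (-α)) :
    ∑ v ∈ T, min ((x v)^2) 1 ≤ (1 + (2:ℝ)^α / (1 - (2:ℝ)^(α-2))) * B := by
  have hq1 : (2:ℝ)^(α-2) < 1 :=
    Real.rpow_lt_one_of_one_lt_of_neg (by norm_num) (by linarith)
  have hq0 : (0:ℝ) < (2:ℝ)^(α-2) := Real.rpow_pos_of_pos (by norm_num) _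
  have h2pos : (0:ℝ) < (2:ℝ)^α := Real.rpow_pos_of_pos (by norm_num) _
  set K' : ℝ := (2:ℝ)^α / (1 - (2:ℝ)^(α-2)) with hK'def
  have hK' : 0 < K' := div_pos h2pos (by linarith)
  have hKrec : (2:ℝ)^α + K' * (2:ℝ)^(α-2) ≤ K' := by
    have hne : (1:ℝ) - (2:ℝ)^(α-2) ≠ 0 := by linarith
    have : (2:ℝ)^α + K' * (2:ℝ)^(α-2) = K' := by
      rw [hK'def]; field_simp; ring
    linarith
  have hsplit := Finset.sum_filter_add_sum_filter_not T (fun v => 1 ≤ x v)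
    (fun v => min ((x v)^2) 1)
  have hb1 : ∑ v ∈ T.filter (fun v => 1 ≤ x v), min ((x v)^2) 1 ≤ B := by
    calc ∑ v ∈ T.filter (fun v => 1 ≤ x v), min ((x v)^2) 1
        ≤ ∑ _v ∈ T.filter (fun v => 1 ≤ x v), (1:ℝ) :=
          Finset.sum_le_sum (fun v _ => min_le_right _ _)
      _ = ((T.filter (fun v => 1 ≤ x v)).card : ℝ) := by
          rw [Finset.sum_const, nsmul_eq_mul, mul_one]
      _ ≤ B * (1:ℝ) ^ (-α) := hM 1 one_pos
      _ = B := by rw [Real.one_rpow, mul_one]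
  have hb2 : ∑ v ∈ T.filter (fun v => ¬ 1 ≤ x v), min ((x v)^2) 1 ≤ K' * B := by
    calc ∑ v ∈ T.filter (fun v => ¬ 1 ≤ x v), min ((x v)^2) 1
        ≤ ∑ v ∈ T.filter (fun v => ¬ 1 ≤ x v), (x v)^2 :=
          Finset.sum_le_sum (fun v _ => min_le_left _ _)
      _ ≤ K' * B * (1:ℝ) ^ ((2:ℝ)-α) :=
          shell_aux' α B K' hα2 hB hK' hKrec T x hx hM _ _
            (Finset.filter_subset _ _) le_rfl 1 one_pos
            (fun v hv => (not_le.mp (Finset.mem_filter.mp hv).2).le)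
      _ = K' * B := by rw [Real.one_rpow, mul_one]
  calc ∑ v ∈ T, min ((x v)^2) 1
      = ∑ v ∈ T.filter (fun v => 1 ≤ x v), min ((x v)^2) 1
        + ∑ v ∈ T.filter (fun v => ¬ 1 ≤ x v), min ((x v)^2) 1 := hsplit.symm
    _ ≤ B + K' * B := add_le_add hb1 hb2
    _ = (1 + K') * B := by ring

end Aux

/-- **Core computation of the subcritical regime.** Let `β ∈ (2,3)`, `γ ≥ 0` with
`β − 1 − γ > 1`, and let `ρ = ρ(n) ∈ (0,1]` satisfy `ρ = o(ν^{−1/(β−1−γ)})` with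
`ν = ν(n) → ∞`. Suppose that the number of initially active neighbours of a vertex `v`
of weight `wt v` is Poisson with mean `lam v ≤ C·ρ·wt v`, and that the number of
vertices of weight `≥ w` in the starting region is at most `C'·ν·w^{1−β+γ}` for all
`w ≥ w_min`. Then the expected number of vertices in the starting region having at
least `k ≥ 2` initially active neighbours is `O(ν·ρ^{β−1−γ}) = o(1)`. -/
theorem subcritical_expected_activation
    {ι : Type*} [DecidableEq ι]
    (β γ : ℝ) (hβ : 2 < β) (hβ' : β < 3) (hγ : 0 ≤ γ) (hβγ : 1 < β - 1 - γ)
    (k : ℕ) (hk : 2 ≤ k)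
    (wmin C C' : ℝ) (hwmin : 0 < wmin) (hC : 0 < C) (hC' : 0 < C')
    (ν ρ : ℕ → ℝ)
    (hν : Tendsto ν atTop atTop)
    (hρ : ∀ n, ρ n ∈ Set.Ioc (0:ℝ) 1)
    (hρsmall : Tendsto (fun n => ρ n * (ν n) ^ (1/(β-1-γ))) atTop (nhds 0))
    (V : ℕ → Finset ι) (wt : ℕ → ι → ℝ) (lam : ℕ → ι → ℝ)
    (hwt : ∀ n, ∀ v ∈ V n, wmin ≤ wt n v)
    (hlam : ∀ n, ∀ v ∈ V n, 0 ≤ lam n v ∧ lam n v ≤ C * ρ n * wt n v)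
    (htail : ∀ n, ∀ w : ℝ, wmin ≤ w →
      (((V n).filter (fun v => w ≤ wt n v)).card : ℝ) ≤ C' * ν n * w ^ (1-β+γ)) :
    ∃ C'' > 0,
      (∀ n, (∑ v ∈ V n, (poissonMeasure (lam n v).toNNReal {j : ℕ | k ≤ j}).toReal)
          ≤ C'' * ν n * (ρ n) ^ (β-1-γ)) ∧
      Tendsto
        (fun n => ∑ v ∈ V n,
          (poissonMeasure (lam n v).toNNReal {j : ℕ | k ≤ j}).toReal)
        atTop (nhds 0) := by
  set α := β - 1 - γ with hα
  have hα0 : 0 < α := by rw [hα]; linarith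
  have hα2 : α < 2 := by rw [hα]; linarith
  have hαexp : 1 - β + γ = -α := by rw [hα]; ring
  -- ν is nonnegative
  have hν0 : ∀ n, 0 ≤ ν n := by
    intro n
    have h := htail n wmin le_rfl
    have hw : 0 < wmin ^ (1-β+γ) := Real.rpow_pos_of_pos hwmin _
    have hcard : (0:ℝ) ≤ (((V n).filter (fun v => wmin ≤ wt n v)).card : ℝ) :=
      Nat.cast_nonneg _
    nlinarith [mul_pos hC' hw]
  -- extended tail bound for all positive thresholds
  have htail' : ∀ n, ∀ t : ℝ, 0 < t →
      (((V n).filter (fun v => t ≤ wt n v)).card : ℝ) ≤ C' * ν n * t ^ (-α) := by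
    intro n t ht
    by_cases hcase : wmin ≤ t
    · have h := htail n t hcase
      rwa [hαexp] at h
    · push_neg at hcase
      have hVn : (V n).filter (fun v => wmin ≤ wt n v) = V n :=
        Finset.filter_true_of_mem (hwt n)
      have h1 : (((V n).filter (fun v => t ≤ wt n v)).card : ℝ) ≤ ((V n).card : ℝ) := by
        exact_mod_cast Finset.card_le_card (Finset.filter_subset _ _)
      have h2 := htail n wmin le_rfl
      rw [hVn] at h2
      rw [hαexp] at h2
      have h3 : wmin ^ (-α) ≤ t ^ (-α) :=
        Real.rpow_le_rpow_of_nonpos ht hcase.le (by linarith)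
      calc (((V n).filter (fun v => t ≤ wt n v)).card : ℝ)
          ≤ C' * ν n * wmin ^ (-α) := le_trans h1 h2
        _ ≤ C' * ν n * t ^ (-α) :=
            mul_le_mul_of_nonneg_left h3 (mul_nonneg hC'.le (hν0 n))
  set K' : ℝ := 1 + (2:ℝ)^α / (1 - (2:ℝ)^(α-2)) with hK'def
  have hq1 : (2:ℝ)^(α-2) < 1 :=
    Real.rpow_lt_one_of_one_lt_of_neg (by norm_num) (by linarith)
  have hK'pos : 0 < K' := by
    have h2pos : (0:ℝ) < (2:ℝ)^α := Real.rpow_pos_of_pos (by norm_num) _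
    have : 0 < (2:ℝ)^α / (1 - (2:ℝ)^(α-2)) := div_pos h2pos (by linarith)
    rw [hK'def]; linarith
  have hCα : (0:ℝ) < C ^ α := Real.rpow_pos_of_pos hC _
  -- the per-n bound
  have main : ∀ n, (∑ v ∈ V n, (poissonMeasure (lam n v).toNNReal {j : ℕ | k ≤ j}).toReal)
      ≤ (K' * C' * C ^ α) * ν n * (ρ n) ^ α := by
    intro n
    obtain ⟨hρ0, hρ1⟩ := hρ n
    have hCρ : (0:ℝ) < C * ρ n := mul_pos hC hρ0
    set x : ι → ℝ := fun v => C * ρ n * wt n v with hxdef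
    have hx : ∀ v ∈ V n, 0 < x v := by
      intro v hv
      have := lt_of_lt_of_le hwmin (hwt n v hv)
      exact mul_pos hCρ this
    set B : ℝ := C' * ν n * (C * ρ n) ^ α with hBdef
    have hB : 0 ≤ B := by
      have : (0:ℝ) ≤ (C * ρ n) ^ α := (Real.rpow_pos_of_pos hCρ _).le
      exact mul_nonneg (mul_nonneg hC'.le (hν0 n)) this
    have hM : ∀ t : ℝ, 0 < t →
        (((V n).filter (fun v => t ≤ x v)).card : ℝ) ≤ B * t ^ (-α) := by
      intro t ht
      have hfe : (V n).filter (fun v => t ≤ x v)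
          = (V n).filter (fun v => t / (C * ρ n) ≤ wt n v) := by
        refine Finset.filter_congr (fun v hv => ?_)
        simp only [hxdef]
        rw [div_le_iff₀ hCρ, mul_comm (wt n v) (C * ρ n)]
      have heq : C' * ν n * (t / (C * ρ n)) ^ (-α) = B * t ^ (-α) := by
        rw [hBdef, Real.div_rpow ht.le hCρ.le, Real.rpow_neg ht.le,
          Real.rpow_neg hCρ.le, div_eq_mul_inv, inv_inv]
        ring
      rw [hfe]
      exact le_trans (htail' n _ (div_pos ht hCρ)) (le_of_eq heq)
    have hterm : ∀ v ∈ V n,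
        (poissonMeasure (lam n v).toNNReal {j : ℕ | k ≤ j}).toReal ≤ min ((x v)^2) 1 := by
      intro v hv
      obtain ⟨hl0, hl1⟩ := hlam n v hv
      refine le_min ?_ (poisson_tail_le_one' _ _)
      refine le_trans (poisson_tail_le_sq' _ hk) ?_
      have hcoe : (((lam n v).toNNReal : ℝ≥0) : ℝ) = lam n v := Real.coe_toNNReal _ hl0
      rw [hcoe]
      have hxv : lam n v ≤ x v := hl1
      nlinarith [hl0, hxv]
    have hKB := shell_sum' α B hα0 hα2 hB (V n) x hx hM
    calc (∑ v ∈ V n, (poissonMeasure (lam n v).toNNReal {j : ℕ | k ≤ j}).toReal)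
        ≤ ∑ v ∈ V n, min ((x v)^2) 1 := Finset.sum_le_sum hterm
      _ ≤ K' * B := by rw [hK'def]; exact hKB
      _ = (K' * C' * C ^ α) * ν n * (ρ n) ^ α := by
          rw [hBdef, Real.mul_rpow hC.le hρ0.le]; ring
  refine ⟨K' * C' * C ^ α, by positivity, main, ?_⟩
  -- the limit
  have hev : ∀ᶠ n in atTop, (1:ℝ) ≤ ν n := hν.eventually_ge_atTop 1
  have heq : (fun n => (ρ n * ν n ^ (1/α)) ^ α) =ᶠ[atTop] (fun n => ν n * ρ n ^ α) := by
    filter_upwards [hev] with n hn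
    obtain ⟨hρ0, -⟩ := hρ n
    have hν1 : (0:ℝ) ≤ ν n := by linarith
    rw [Real.mul_rpow hρ0.le (Real.rpow_nonneg hν1 _),
      ← Real.rpow_mul hν1, one_div_mul_cancel (ne_of_gt hα0), Real.rpow_one]
    ring
  have hlim0 : Tendsto (fun n => (ρ n * ν n ^ (1/α)) ^ α) atTop (nhds 0) := by
    have hcont : ContinuousAt (fun y : ℝ => y ^ α) 0 :=
      Real.continuousAt_rpow_const 0 α (Or.inr hα0.le)
    have h := hcont.tendsto.comp hρsmall
    simpa [Function.comp_def, Real.zero_rpow (ne_of_gt hα0)] using h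
  have hνρ : Tendsto (fun n => ν n * ρ n ^ α) atTop (nhds 0) := hlim0.congr' heq
  have hupper : Tendsto (fun n => (K' * C' * C ^ α) * ν n * (ρ n) ^ α) atTop (nhds 0) := by
    have := hνρ.const_mul (K' * C' * C ^ α)
    simpa [mul_assoc] using this
  refine tendsto_of_tendsto_of_tendsto_of_le_of_le tendsto_const_nhds hupper
    (fun n => Finset.sum_nonneg (fun v _ => ENNReal.toReal_nonneg)) main
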